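/- Let G be a group and A a symmetrical partial kG-module algebra. For g ∈ G let ψ_g: A → A be defined by ψ_g(a) = g·(g⁻¹·a). Then ψ_g is an A-bimodule map (ψ_g(axb) = a ψ_g(x) b for all a,x,b ∈ A), ψ_g(A) is a two-sided ideal of A, and if A is idempotent or r(A)=0 or l(A)=0, then ψ_g² = ψ_g. -/
import Mathlib


section PartialGroupPrelude

variable (k : Type) [Field k] (G : Type) [Group G]
variable (A : Type) [NonUnitalRing A] [Module k A] [SMulCommClass k A A] [IsScalarTower k A A]

/-- A symmetrical partial action of the group algebra `kG` on the (possibly nonunital)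
algebra `A`, written out on the grouplike elements of `kG`:
`1 · a = a`, `g · (a (h · b)) = (g · a)(gh · b)` and `g · ((h · b) a) = (gh · b)(g · a)`. -/
structure SymmPartialGAction where
  act : G → A →ₗ[k] A
  one_act : ∀ a : A, act 1 a = a
  act_mul_right : ∀ (g h : G) (a b : A), act g (a * act h b) = act g a * act (g * h) b
  act_mul_left : ∀ (g h : G) (a b : A), act g (act h b * a) = act (g * h) b * act g a

/-- The algebra `A` is idempotent: `A² = A`. -/
def IsIdempotentAlgebra : Prop :=
  ∀ a : A, a ∈ Submodule.span k {x : A | ∃ b c : A, x = b * c}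

/-- `r(A) = 0`: the right annihilator of `A` is trivial. -/
def RAnnTrivial : Prop := ∀ a : A, (∀ b : A, b * a = 0) → a = 0

/-- `l(A) = 0`: the left annihilator of `A` is trivial. -/
def LAnnTrivial : Prop := ∀ b : A, (∀ a : A, b * a = 0) → b = 0

variable {k G A}

/-- `ψ_g(a) = g · (g⁻¹ · a)`. -/
def psiMap (P : SymmPartialGAction k G A) (g : G) : A →ₗ[k] A :=
  (P.act g).comp (P.act g⁻¹)

end PartialGroupPrelude

section Stmt5

variable {k : Type} [Field k] {G : Type} [Group G]
variable {A : Type} [NonUnitalRing A] [Module k A] [SMulCommClass k A A] [IsScalarTower k A A]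

private lemma act_mul (P : SymmPartialGAction k G A) (g : G) (a b : A) :
    P.act g (a * b) = P.act g a * P.act g b := by
  have h := P.act_mul_right g 1 a b
  simpa [P.one_act] using h

/-- ψ(b*y) = b*ψy -/
private lemma psi_mul_right (P : SymmPartialGAction k G A) (g : G) (b y : A) :
    psiMap P g (b * y) = b * psiMap P g y := by
  simp only [psiMap, LinearMap.comp_apply]
  rw [act_mul P g⁻¹ b y]
  have h := P.act_mul_left g g⁻¹ (P.act g⁻¹ y) b
  simpa [P.one_act] using h

/-- ψ(y*b) = ψy*b -/
private lemma psi_mul_left (P : SymmPartialGAction k G A) (g : G) (b y : A) :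
    psiMap P g (y * b) = psiMap P g y * b := by
  simp only [psiMap, LinearMap.comp_apply]
  rw [act_mul P g⁻¹ y b]
  have h := P.act_mul_right g g⁻¹ (P.act g⁻¹ y) b
  simpa [P.one_act] using h

/-- ψ(a * g·e) = a * g·e -/
private lemma psi_fix_right (P : SymmPartialGAction k G A) (g : G) (a e : A) :
    psiMap P g (a * P.act g e) = a * P.act g e := by
  simp only [psiMap, LinearMap.comp_apply]
  have h1 : P.act g⁻¹ (a * P.act g e) = P.act g⁻¹ a * e := by
    have := P.act_mul_right g⁻¹ g a e
    simpa [P.one_act] using this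
  rw [h1]
  have h2 := P.act_mul_left g g⁻¹ e a
  simpa [P.one_act] using h2

/-- ψ(g·e * a) = g·e * a -/
private lemma psi_fix_left (P : SymmPartialGAction k G A) (g : G) (a e : A) :
    psiMap P g (P.act g e * a) = P.act g e * a := by
  simp only [psiMap, LinearMap.comp_apply]
  have h1 : P.act g⁻¹ (P.act g e * a) = e * P.act g⁻¹ a := by
    have := P.act_mul_left g⁻¹ g a e
    simpa [P.one_act] using this
  rw [h1]
  have h2 := P.act_mul_right g g⁻¹ e a
  simpa [P.one_act] using h2

/-- For a symmetrical partial `kG`-module algebra `A` and `g ∈ G`, the map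
`ψ_g(a) = g · (g⁻¹ · a)` is an `A`-bimodule map, its image is a two-sided ideal of `A`, and
if `A` is idempotent or `r(A) = 0` or `l(A) = 0` then `ψ_g² = ψ_g`. -/
theorem psi_bimodule_ideal_idempotent (P : SymmPartialGAction k G A) (g : G) :
    (∀ a x b : A, psiMap P g (a * x * b) = a * psiMap P g x * b) ∧
    (∀ (a : A) (x : A),
      a * psiMap P g x ∈ Set.range (psiMap P g) ∧
      psiMap P g x * a ∈ Set.range (psiMap P g)) ∧
    ((IsIdempotentAlgebra k A ∨ RAnnTrivial A ∨ LAnnTrivial A) →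
      (psiMap P g).comp (psiMap P g) = psiMap P g) := by
  have hfixr : ∀ a x : A, psiMap P g (a * psiMap P g x) = a * psiMap P g x := fun a x =>
    psi_fix_right P g a (P.act g⁻¹ x)
  have hfixl : ∀ a x : A, psiMap P g (psiMap P g x * a) = psiMap P g x * a := fun a x =>
    psi_fix_left P g a (P.act g⁻¹ x)
  refine ⟨fun a x b => ?_, fun a x => ⟨⟨a * psiMap P g x, hfixr a x⟩,
    ⟨psiMap P g x * a, hfixl a x⟩⟩, ?_⟩
  · rw [psi_mul_left, psi_mul_right]
  · rintro (h | h | h)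
    · ext x
      simp only [LinearMap.comp_apply, LinearMap.id_apply]
      induction h x using Submodule.span_induction with
      | mem y hy =>
        obtain ⟨b, c, rfl⟩ := hy
        rw [psi_mul_right, hfixr]
      | zero => simp
      | add y z _ _ hy hz => simp [hy, hz]
      | smul c y _ hy => simp [hy]
    · ext x
      simp only [LinearMap.comp_apply, LinearMap.id_apply]
      rw [← sub_eq_zero]
      apply h
      intro b
      have h1 : b * psiMap P g (psiMap P g x) = b * psiMap P g x := by
        rw [← psi_mul_right, hfixr]
      rw [mul_sub, h1, sub_self]
    · ext x
      simp only [LinearMap.comp_apply, LinearMap.id_apply]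
      rw [← sub_eq_zero]
      apply h
      intro b
      have h1 : psiMap P g (psiMap P g x) * b = psiMap P g x * b := by
        rw [← psi_mul_left, hfixl]
      rw [sub_mul, h1, sub_self]

end Stmt5
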